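/- Let f: R^d → R be L-smooth (∇f is L-Lipschitz) and bounded below by f*. Consider iterates x_{t+1} = x_t − α_t g_t where the random vectors g_t satisfy E[‖g_t‖² | x_t] ≤ C for a constant C > 0 and −E[⟨∇f(x_t), g_t⟩ | x_t] ≤ −Φ_t for nonnegative F_t-measurable Φ_t. If ∑_t α_t² < ∞, then ∑_{t=1}^∞ α_t Φ_t < ∞ almost surely. -/

import Mathlib

open MeasureTheory Filter Topology RealInnerProductSpace

theorem descent_lemma {d : ℕ} (f : EuclideanSpace ℝ (Fin d) → ℝ)
    (f' : EuclideanSpace ℝ (Fin d) → EuclideanSpace ℝ (Fin d)) (L : ℝ) (hL : 0 ≤ L)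
    (hgrad : ∀ y, HasGradientAt f (f' y) y)
    (hlip : LipschitzWith (Real.toNNReal L) f') (p q : EuclideanSpace ℝ (Fin d)) :
    f q ≤ f p + ⟪f' p, q - p⟫ + L / 2 * ‖q - p‖ ^ 2 := by
  set v := q - p with hv
  set h : ℝ → ℝ := fun t => f p + t * ⟪f' p, v⟫ + L / 2 * t ^ 2 * ‖v‖ ^ 2 - f (p + t • v) with hh
  have hcurve : ∀ t : ℝ, HasDerivAt (fun s : ℝ => p + s • v) v t := by
    intro t
    simpa using ((hasDerivAt_id t).smul_const v).const_add p
  have hφ : ∀ t : ℝ, HasDerivAt (fun s : ℝ => f (p + s • v)) ⟪f' (p + t • v), v⟫ t := by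
    intro t
    have := (hgrad (p + t • v)).hasFDerivAt.comp_hasDerivAt t (hcurve t)
    simpa [InnerProductSpace.toDual_apply_apply, Function.comp_def] using this
  have hder : ∀ t : ℝ, HasDerivAt h
      (⟪f' p, v⟫ + L * t * ‖v‖ ^ 2 - ⟪f' (p + t • v), v⟫) t := by
    intro t
    have h1 : HasDerivAt (fun s : ℝ => f p + s * ⟪f' p, v⟫ + L / 2 * s ^ 2 * ‖v‖ ^ 2)
        (⟪f' p, v⟫ + L * t * ‖v‖ ^ 2) t := by
      have ha : HasDerivAt (fun s : ℝ => f p + s * ⟪f' p, v⟫) (⟪f' p, v⟫) t := by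
        simpa using ((hasDerivAt_id t).mul_const ⟪f' p, v⟫).const_add (f p)
      have hb : HasDerivAt (fun s : ℝ => L / 2 * s ^ 2 * ‖v‖ ^ 2)
          (L * t * ‖v‖ ^ 2) t := by
        have := ((hasDerivAt_pow 2 t).const_mul (L / 2)).mul_const (‖v‖ ^ 2)
        convert this using 1
        · rfl
        · rfl
        ring
      exact ha.add hb
    exact h1.sub (hφ t)
  have hmono : MonotoneOn h (Set.Icc (0 : ℝ) 1) := by
    apply monotoneOn_of_deriv_nonneg (convex_Icc 0 1)
    · exact (continuous_iff_continuousAt.2 fun t => (hder t).continuousAt).continuousOn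
    · exact fun t _ => (hder t).differentiableAt.differentiableWithinAt
    · intro t ht
      rw [interior_Icc] at ht
      rw [(hder t).deriv]
      have hkey : ⟪f' (p + t • v) - f' p, v⟫ ≤ L * t * ‖v‖ ^ 2 := by
        calc ⟪f' (p + t • v) - f' p, v⟫ ≤ ‖f' (p + t • v) - f' p‖ * ‖v‖ :=
              real_inner_le_norm _ _
        _ ≤ (L * (t * ‖v‖)) * ‖v‖ := by
            apply mul_le_mul_of_nonneg_right _ (norm_nonneg v)
            have := hlip.dist_le_mul (p + t • v) p
            rw [Real.coe_toNNReal L hL] at this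
            simpa [dist_eq_norm, norm_smul, abs_of_pos ht.1] using this
        _ = L * t * ‖v‖ ^ 2 := by ring
      rw [inner_sub_left] at hkey
      linarith
  have h0 : h 0 = 0 := by simp [hh]
  have h01 : h 0 ≤ h 1 := hmono (by norm_num) (by norm_num) zero_le_one
  have h1 : h 1 = f p + ⟪f' p, v⟫ + L / 2 * ‖v‖ ^ 2 - f q := by
    simp [hh, hv]
  rw [h0, h1] at h01
  linarith


theorem dp_sgd_summability
    {Ω : Type*} {m0 : MeasurableSpace Ω} {P : Measure Ω} [IsProbabilityMeasure P]
    {d : ℕ} (ℱ : Filtration ℕ m0)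
    (f : EuclideanSpace ℝ (Fin d) → ℝ)
    (f' : EuclideanSpace ℝ (Fin d) → EuclideanSpace ℝ (Fin d))
    (L C fstar : ℝ) (hL : 0 < L) (hC : 0 < C)
    (hgrad : ∀ y, HasGradientAt f (f' y) y)
    (hlip : LipschitzWith (Real.toNNReal L) f')
    (hbdd : ∀ y, fstar ≤ f y)
    (x g : ℕ → Ω → EuclideanSpace ℝ (Fin d)) (Φ : ℕ → Ω → ℝ) (α : ℕ → ℝ)
    (hxadp : Adapted ℱ x) (hΦadp : Adapted ℱ Φ) (hΦpos : ∀ t ω, 0 ≤ Φ t ω)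
    (hΦint : ∀ t, Integrable (Φ t) P)
    (hfint : ∀ t, Integrable (fun ω => f (x t ω)) P)
    (hg2int : ∀ t, Integrable (fun ω => ‖g t ω‖ ^ 2) P)
    (hinnerint : ∀ t, Integrable (fun ω => ⟪f' (x t ω), g t ω⟫) P)
    (hrec : ∀ t ω, x (t + 1) ω = x t ω - α t • g t ω)
    (hg2 : ∀ t, ∀ᵐ ω ∂P, (P[fun ω => ‖g t ω‖ ^ 2 | ℱ t]) ω ≤ C)
    (hinner : ∀ t, ∀ᵐ ω ∂P,
      (P[fun ω => -⟪f' (x t ω), g t ω⟫ | ℱ t]) ω ≤ -Φ t ω)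
    (hαpos : ∀ t, 0 < α t) (hα2 : Summable fun t => α t ^ 2) :
    ∀ᵐ ω ∂P, Summable fun t => α t * Φ t ω := by
  have hfcont : Continuous f :=
    continuous_iff_continuousAt.2 fun y => (hgrad y).differentiableAt.continuousAt
  have hfxadp : ∀ t, StronglyMeasurable[ℱ t] (fun ω => f (x t ω)) := fun t =>
    hfcont.comp_stronglyMeasurable (hxadp t).stronglyMeasurable
  -- Step 1: one-step conditional descent
  have hstep : ∀ t, (P[fun ω => f (x (t + 1) ω) | ℱ t]) ≤ᵐ[P]
      fun ω => f (x t ω) - α t * Φ t ω + L / 2 * α t ^ 2 * C := by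
    intro t
    set B : Ω → ℝ := fun ω => -⟪f' (x t ω), g t ω⟫ with hB
    set G : Ω → ℝ := fun ω => ‖g t ω‖ ^ 2 with hG
    have hBint : Integrable B P := (hinnerint t).neg
    have hptwise : ∀ ω, f (x (t + 1) ω) ≤
        (fun ω => f (x t ω)) ω + (α t • B) ω + ((L / 2 * α t ^ 2) • G) ω := by
      intro ω
      have := descent_lemma f f' L hL.le hgrad hlip (x t ω) (x (t + 1) ω)
      have hdiff : x (t + 1) ω - x t ω = -(α t • g t ω) := by
        rw [hrec t ω]; abel
      rw [hdiff] at this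
      simp only [inner_neg_right, real_inner_smul_right, norm_neg, norm_smul] at this
      simp only [Pi.smul_apply, smul_eq_mul, hB, hG]
      rw [Real.norm_eq_abs, abs_of_pos (hαpos t)] at this
      exact this.trans_eq (by ring)
    have hrhsint : Integrable
        ((fun ω => f (x t ω)) + α t • B + (L / 2 * α t ^ 2) • G) P :=
      (((hfint t).add (hBint.smul (α t))).add ((hg2int t).smul (L / 2 * α t ^ 2)))
    have hmono := condExp_mono (m := ℱ t) (μ := P) (hfint (t + 1)) hrhsint
      (Filter.Eventually.of_forall hptwise)
    have hsum1 := condExp_add (m := ℱ t) (μ := P) ((hfint t).add (hBint.smul (α t)))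
      ((hg2int t).smul (L / 2 * α t ^ 2))
    have hsum2 := condExp_add (m := ℱ t) (μ := P) (hfint t) (hBint.smul (α t))
    have hA := condExp_of_stronglyMeasurable (ℱ.le t) (hfxadp t) (hfint t)
    have hsmulB := condExp_smul (m := ℱ t) (μ := P) (α t) B
    have hsmulG := condExp_smul (m := ℱ t) (μ := P) (L / 2 * α t ^ 2) G
    filter_upwards [hmono, hsum1, hsum2, hsmulB, hsmulG, hinner t, hg2 t]
      with ω h1 h2 h2' h3 h4 h5 h6
    have e2 : (P[(fun ω => f (x t ω)) + α t • B + (L / 2 * α t ^ 2) • G | ℱ t]) ω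
        = (P[fun ω => f (x t ω) | ℱ t]) ω + (P[α t • B | ℱ t]) ω
          + (P[(L / 2 * α t ^ 2) • G | ℱ t]) ω := by
      rw [h2, Pi.add_apply, h2', Pi.add_apply]
    rw [e2, hA, h3, h4] at h1
    simp only [Pi.smul_apply, smul_eq_mul] at h1
    have hb : α t * (P[B | ℱ t]) ω ≤ α t * (-Φ t ω) :=
      mul_le_mul_of_nonneg_left h5 (hαpos t).le
    have hg : L / 2 * α t ^ 2 * (P[G | ℱ t]) ω ≤ L / 2 * α t ^ 2 * C := by
      apply mul_le_mul_of_nonneg_left h6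
      positivity
    calc (P[fun ω => f (x (t + 1) ω) | ℱ t]) ω ≤ _ := h1
    _ ≤ f (x t ω) - α t * Φ t ω + L / 2 * α t ^ 2 * C := by nlinarith
  -- Step 2: supermartingale construction
  set S : ℕ → Ω → ℝ := fun t ω => ∑ s ∈ Finset.range t, α s * Φ s ω with hS
  set R : ℕ → ℝ := fun t => ∑' s, α (s + t) ^ 2 with hRdef
  have hRsummable : ∀ t, Summable fun s => α (s + t) ^ 2 := fun t =>
    (summable_nat_add_iff t).2 hα2
  have hRrec : ∀ t, R t = α t ^ 2 + R (t + 1) := by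
    intro t
    show (∑' s, α (s + t) ^ 2) = α t ^ 2 + ∑' s, α (s + (t + 1)) ^ 2
    rw [Summable.tsum_eq_zero_add (hRsummable t)]
    simp only [zero_add]
    congr 1
    exact tsum_congr fun b => by rw [show b + 1 + t = b + (t + 1) from by omega]
  have hRnonneg : ∀ t, 0 ≤ R t := fun t => tsum_nonneg fun s => sq_nonneg _
  set V : ℕ → Ω → ℝ := fun t ω => f (x t ω) - fstar + S t ω + L * C / 2 * R t with hV
  have hSadp : ∀ t, StronglyMeasurable[ℱ t] (S t) := by
    intro t
    apply Finset.stronglyMeasurable_fun_sum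
    intro s hs
    exact ((hΦadp s).stronglyMeasurable.mono (ℱ.mono (Finset.mem_range.1 hs).le)).const_mul (α s)
  have hSint : ∀ t, Integrable (S t) P := fun t =>
    integrable_finset_sum _ fun s _ => (hΦint s).const_mul (α s)
  have hVadp : Adapted ℱ V := fun t =>
    (((hfxadp t).sub stronglyMeasurable_const).add (hSadp t)).add stronglyMeasurable_const |>.measurable
  have hVint : ∀ t, Integrable (V t) P := fun t =>
    (((hfint t).sub (integrable_const fstar)).add (hSint t)).add (integrable_const _)
  have hVsuper : Supermartingale V ℱ P := by
    apply supermartingale_nat hVadp.stronglyAdapted hVint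
    intro t
    set W : Ω → ℝ := fun ω => S (t + 1) ω + L * C / 2 * R (t + 1) - fstar with hW
    have hWadp : StronglyMeasurable[ℱ t] W := by
      apply StronglyMeasurable.sub _ stronglyMeasurable_const
      apply StronglyMeasurable.add _ stronglyMeasurable_const
      apply Finset.stronglyMeasurable_fun_sum
      intro s hs
      have hsle : s ≤ t := by have := Finset.mem_range.1 hs; omega
      exact ((hΦadp s).stronglyMeasurable.mono (ℱ.mono hsle)).const_mul (α s)
    have hWint : Integrable W P :=
      ((hSint (t + 1)).add (integrable_const _)).sub (integrable_const fstar)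
    have hVeq : V (t + 1) = (fun ω => f (x (t + 1) ω)) + W := by
      funext ω; simp only [hV, hW, Pi.add_apply]; ring
    rw [hVeq]
    have hadd := condExp_add (m := ℱ t) (μ := P) (hfint (t + 1)) hWint
    have hWeq := condExp_of_stronglyMeasurable (ℱ.le t) hWadp hWint
    filter_upwards [hadd, hstep t] with ω h1 h2
    rw [h1, Pi.add_apply, hWeq]
    have hSrec : S (t + 1) ω = S t ω + α t * Φ t ω := Finset.sum_range_succ _ _
    have hRr := hRrec t
    simp only [hV, hW]
    rw [hSrec]
    have e : L * C / 2 * R t = L / 2 * α t ^ 2 * C + L * C / 2 * R (t + 1) := by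
      rw [hRr]; ring
    linarith [h2, e]
  -- Step 3: L¹ bound and convergence
  have hVnonneg : ∀ t ω, 0 ≤ V t ω := by
    intro t ω
    have h1 := hbdd (x t ω)
    have h2 : 0 ≤ S t ω := Finset.sum_nonneg fun s _ =>
      mul_nonneg (hαpos s).le (hΦpos s ω)
    have h3 : 0 ≤ L * C / 2 * R t :=
      mul_nonneg (by positivity) (hRnonneg t)
    simp only [hV]
    linarith
  have hbound : ∀ n, eLpNorm (-V n) 1 P ≤ ENNReal.ofReal (∫ ω, V 0 ω ∂P) := by
    intro n
    rw [eLpNorm_neg]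
    have h1 : eLpNorm (V n) 1 P = ENNReal.ofReal (∫ ω, ‖V n ω‖ ∂P) := by
      rw [eLpNorm_one_eq_lintegral_enorm,
        ← ofReal_integral_norm_eq_lintegral_enorm (hVint n)]
    rw [h1]
    apply ENNReal.ofReal_le_ofReal
    have h2 : ∫ ω, ‖V n ω‖ ∂P = ∫ ω, V n ω ∂P := by
      apply integral_congr_ae
      exact Filter.Eventually.of_forall fun ω => abs_of_nonneg (hVnonneg n ω)
    rw [h2]
    have := hVsuper.setIntegral_le (Nat.zero_le n) (MeasurableSet.univ (α := Ω))
    simpa using this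
  have hconv := hVsuper.neg.ae_tendsto_limitProcess hbound
  filter_upwards [hconv] with ω hω
  have htend : Tendsto (fun n => V n ω) atTop (𝓝 (-(ℱ.limitProcess (-V) P ω))) := by
    have := hω.neg
    simpa using this
  obtain ⟨M, hM⟩ := htend.bddAbove_range
  apply summable_of_sum_range_le (c := M)
    (fun n => mul_nonneg (hαpos n).le (hΦpos n ω))
  intro n
  have h1 : S n ω ≤ V n ω := by
    have h2 := hbdd (x n ω)
    have h3 : 0 ≤ L * C / 2 * R n := mul_nonneg (by positivity) (hRnonneg n)
    simp only [hV]; linarith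
  exact h1.trans (hM ⟨n, rfl⟩)
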